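/- Let α, β ≥ -1/2 and m, n ≥ 0 be integers. There exists a constant C depending only on α, β, m, n such that for all θ, φ ∈ (0,π), u, v ∈ [-1,1] and t > 0: |∂_φ ∂_θ^n ∂_t^m Ψ^{α,β}(t, q(θ,φ,u,v))| ≤ C (t² + q(θ,φ,u,v))^{-(α+β+2)-(m+n)/2} when t ≤ 1, and |∂_φ ∂_θ^n ∂_t^m Ψ^{α,β}(t, q(θ,φ,u,v))| ≤ C exp(-t/4) when t > 1. -/

import Mathlib

open MeasureTheory Real Set

noncomputable section

/-- The Jacobi measure `μ_{α,β}^+` on `(0,π)`: density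
`(sin(θ/2))^(2α+1) (cos(θ/2))^(2β+1)` w.r.t. Lebesgue measure on `(0,π)`. -/
def jacobiMeasure (α β : ℝ) : Measure ℝ :=
  (volume.restrict (Ioo 0 π)).withDensity
    (fun θ => ENNReal.ofReal (Real.sin (θ / 2) ^ (2 * α + 1) * Real.cos (θ / 2) ^ (2 * β + 1)))

/-- The ball `B(θ,r) = (θ-r, θ+r) ∩ (0,π)`. -/
def jacobiBall (θ r : ℝ) : Set ℝ := Ioo (θ - r) (θ + r) ∩ Ioo 0 π

/-- The measure `Π_α` on `[-1,1]`. -/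
def PiMeasure (α : ℝ) : Measure ℝ :=
  if α = -(1 / 2) then (2 : ENNReal)⁻¹ • (Measure.dirac (-1) + Measure.dirac 1)
  else
    (volume.restrict (Icc (-1) 1)).withDensity
      (fun u => ENNReal.ofReal
        (Real.Gamma (α + 1) / (Real.sqrt π * Real.Gamma (α + 1 / 2)) * (1 - u ^ 2) ^ (α - 1 / 2)))

/-- `q(θ,φ,u,v) = 1 - u sin(θ/2) sin(φ/2) - v cos(θ/2) cos(φ/2)`. -/
def qfun (θ φ u v : ℝ) : ℝ :=
  1 - u * Real.sin (θ / 2) * Real.sin (φ / 2) - v * Real.cos (θ / 2) * Real.cos (φ / 2)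

/-- `Ψ^{α,β}(t,s) = sinh(t/2) / (cosh(t/2) - 1 + s)^(α+β+2)`. -/
def Psi (α β t s : ℝ) : ℝ :=
  Real.sinh (t / 2) / (Real.cosh (t / 2) - 1 + s) ^ (α + β + 2)

/-- The Jacobi-Poisson kernel `H_t^{α,β}(θ,φ)`. -/
def Hker (α β t θ φ : ℝ) : ℝ :=
  ((2 : ℝ) ^ (-(α + β + 2)) / (jacobiMeasure α β (Ioo 0 π)).toReal) * Real.sinh (t / 2) *
    ∫ u, ∫ v, 1 / (Real.cosh (t / 2) - 1 + qfun θ φ u v) ^ (α + β + 2)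
      ∂(PiMeasure β) ∂(PiMeasure α)

/-- The symmetrized kernel `H̃_t^{α,β}(θ,φ) = (1/4) sin θ sin φ H_t^{α+1,β+1}(θ,φ)`. -/
def Htilde (α β t θ φ : ℝ) : ℝ :=
  (1 / 4) * Real.sin θ * Real.sin φ * Hker (α + 1) (β + 1) t θ φ

end

namespace PsiAux

noncomputable def qd (u v : ℝ) (i j : ℕ) (θ φ : ℝ) : ℝ :=
  (if i = 0 ∧ j = 0 then 1 else 0)
    - u * ((1/2:ℝ)^(i+j) * (Real.sin (θ/2 + i*(π/2)) * Real.sin (φ/2 + j*(π/2))))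
    - v * ((1/2:ℝ)^(i+j) * (Real.cos (θ/2 + i*(π/2)) * Real.cos (φ/2 + j*(π/2))))

lemma qd_zero (u v θ φ : ℝ) : qd u v 0 0 θ φ = qfun θ φ u v := by
  simp [qd, qfun]; ring

lemma core_ineq (p r cx sx cy sy : ℝ) (hpr : |p| + |r| ≤ 1)
    (hx : sx^2 + cx^2 = 1) (hy : sy^2 + cy^2 = 1) :
    ((p*sx + r*sy)/2)^2 ≤ 1 - p*cx - r*cy := by
  have hp1 : |p| ≤ 1 := by have := abs_nonneg r; linarith
  have hr1 : |r| ≤ 1 := by have := abs_nonneg p; linarith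
  have hcx : |cx| ≤ 1 := by nlinarith [sq_nonneg sx, sq_abs cx]
  have hcy : |cy| ≤ 1 := by nlinarith [sq_nonneg sy, sq_abs cy]
  have hpc : p*cx ≤ |p| * |cx| := by
    have h := le_abs_self (p*cx); rw [abs_mul] at h; exact h
  have hrc : r*cy ≤ |r| * |cy| := by
    have h := le_abs_self (r*cy); rw [abs_mul] at h; exact h
  have key : ∀ z c s : ℝ, |z| ≤ 1 → s^2 + c^2 = 1 → z*c ≤ |z| * |c| → |c| ≤ 1 →
      z^2*s^2 ≤ 2*(|z| - z*c) := by
    intro z c s hz hsc hzc hc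
    have hs : s^2 = 1 - c^2 := by linarith
    have h3 : 0 ≤ (1 - |z|) * (1 - |c|^2) :=
      mul_nonneg (by linarith) (by nlinarith [abs_nonneg c])
    have h4 : 0 ≤ |z| * (1 - |c|)^2 := mul_nonneg (abs_nonneg z) (sq_nonneg _)
    have h5 : 0 ≤ |z| * ((1 - |z|) * (1 - |c|^2)) := mul_nonneg (abs_nonneg z) h3
    rw [hs]
    nlinarith [sq_abs z, sq_abs c]
  have h1 : p^2*sx^2 ≤ 2*(|p| - p*cx) := key p cx sx hp1 hx hpc hcx
  have h2 : r^2*sy^2 ≤ 2*(|r| - r*cy) := key r cy sy hr1 hy hrc hcy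
  nlinarith [sq_nonneg (p*sx - r*sy)]

lemma pr_abs (u v : ℝ) (hu : |u| ≤ 1) (hv : |v| ≤ 1) :
    |(u+v)/2| + |(v-u)/2| ≤ 1 := by
  have hu' := abs_le.mp hu
  have hv' := abs_le.mp hv
  rcases abs_cases ((u+v)/2) with ⟨h,_⟩|⟨h,_⟩ <;>
    rcases abs_cases ((v-u)/2) with ⟨h',_⟩|⟨h',_⟩ <;> rw [h, h'] <;>
      linarith [hu'.1, hu'.2, hv'.1, hv'.2]


variable {u v θ φ : ℝ}

lemma q_eq (u v θ φ : ℝ) : qfun θ φ u v =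
    1 - ((u+v)/2) * Real.cos (θ/2 - φ/2) - ((v-u)/2) * Real.cos (θ/2 + φ/2) := by
  rw [qfun, Real.cos_sub, Real.cos_add]; ring

lemma qd10_eq (u v θ φ : ℝ) : qd u v 1 0 θ φ =
    (((u+v)/2) * Real.sin (θ/2 - φ/2) + ((v-u)/2) * Real.sin (θ/2 + φ/2))/2 := by
  simp only [qd, Nat.cast_one, Nat.cast_zero, one_mul, zero_mul, add_zero,
    Real.sin_add_pi_div_two, Real.cos_add_pi_div_two]
  rw [Real.sin_sub, Real.sin_add]
  norm_num; ring

lemma qd01_eq (u v θ φ : ℝ) : qd u v 0 1 θ φ =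
    (((u+v)/2) * (-Real.sin (θ/2 - φ/2)) + ((v-u)/2) * Real.sin (θ/2 + φ/2))/2 := by
  simp only [qd, Nat.cast_one, Nat.cast_zero, one_mul, zero_mul, add_zero,
    Real.sin_add_pi_div_two, Real.cos_add_pi_div_two]
  rw [Real.sin_sub, Real.sin_add]
  norm_num; ring

lemma qd10_sq_le (hu : |u| ≤ 1) (hv : |v| ≤ 1) : (qd u v 1 0 θ φ)^2 ≤ qfun θ φ u v := by
  have h := core_ineq ((u+v)/2) ((v-u)/2) (Real.cos (θ/2 - φ/2)) (Real.sin (θ/2 - φ/2))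
    (Real.cos (θ/2 + φ/2)) (Real.sin (θ/2 + φ/2)) (pr_abs u v hu hv)
    (Real.sin_sq_add_cos_sq _) (Real.sin_sq_add_cos_sq _)
  rw [qd10_eq, q_eq]; linarith

lemma qd01_sq_le (hu : |u| ≤ 1) (hv : |v| ≤ 1) : (qd u v 0 1 θ φ)^2 ≤ qfun θ φ u v := by
  have h := core_ineq ((u+v)/2) ((v-u)/2) (Real.cos (θ/2 - φ/2)) (-Real.sin (θ/2 - φ/2))
    (Real.cos (θ/2 + φ/2)) (Real.sin (θ/2 + φ/2)) (pr_abs u v hu hv)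
    (by simpa using Real.sin_sq_add_cos_sq (θ/2 - φ/2)) (Real.sin_sq_add_cos_sq _)
  rw [qd01_eq, q_eq]; linarith

lemma pcx_bounds (p x : ℝ) : -|p| ≤ p * Real.cos x ∧ p * Real.cos x ≤ |p| := by
  have h : |p * Real.cos x| ≤ |p| := by
    rw [abs_mul]
    calc |p| * |Real.cos x| ≤ |p| * 1 := by
          gcongr; exact Real.abs_cos_le_one x
    _ = |p| := mul_one _
  exact ⟨(abs_le.mp h).1, (abs_le.mp h).2⟩

lemma q_nonneg (hu : |u| ≤ 1) (hv : |v| ≤ 1) : 0 ≤ qfun θ φ u v := by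
  rw [q_eq]
  have h1 := (pcx_bounds ((u+v)/2) (θ/2 - φ/2)).2
  have h2 := (pcx_bounds ((v-u)/2) (θ/2 + φ/2)).2
  linarith [pr_abs u v hu hv]

lemma q_le_two (hu : |u| ≤ 1) (hv : |v| ≤ 1) : qfun θ φ u v ≤ 2 := by
  rw [q_eq]
  have h1 := (pcx_bounds ((u+v)/2) (θ/2 - φ/2)).1
  have h2 := (pcx_bounds ((v-u)/2) (θ/2 + φ/2)).1
  linarith [pr_abs u v hu hv]

lemma qd10_abs_le_sqrt (hu : |u| ≤ 1) (hv : |v| ≤ 1) :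
    |qd u v 1 0 θ φ| ≤ Real.sqrt (qfun θ φ u v) := by
  rw [← Real.sqrt_sq_eq_abs]; exact Real.sqrt_le_sqrt (qd10_sq_le hu hv)

lemma qd01_abs_le_sqrt (hu : |u| ≤ 1) (hv : |v| ≤ 1) :
    |qd u v 0 1 θ φ| ≤ Real.sqrt (qfun θ φ u v) := by
  rw [← Real.sqrt_sq_eq_abs]; exact Real.sqrt_le_sqrt (qd01_sq_le hu hv)

lemma qd_abs_le_one (hu : |u| ≤ 1) (hv : |v| ≤ 1) {i j : ℕ} (hij : ¬(i = 0 ∧ j = 0)) :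
    |qd u v i j θ φ| ≤ 1 := by
  have hk : |(1/2:ℝ)|^(i+j) ≤ 1/2 := by
    rw [abs_of_pos (by norm_num : (0:ℝ) < 1/2)]
    calc (1/2:ℝ)^(i+j) ≤ (1/2:ℝ)^1 :=
          pow_le_pow_of_le_one (by norm_num) (by norm_num) (by omega)
    _ = 1/2 := pow_one _
  have habs : ∀ z w1 w2 : ℝ, |z| ≤ 1 → |w1| ≤ 1 → |w2| ≤ 1 →
      |z * ((1/2:ℝ)^(i+j) * (w1*w2))| ≤ 1/2 := by
    intro z w1 w2 hz h1 h2
    rw [abs_mul, abs_mul, abs_mul, abs_pow]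
    calc |z| * (|(1/2:ℝ)|^(i+j) * (|w1| * |w2|)) ≤ 1 * ((1/2) * (1*1)) := by
          gcongr <;> positivity
    _ = 1/2 := by norm_num
  rw [qd, if_neg hij]
  have h1 := habs u (Real.sin (θ/2 + i*(π/2))) (Real.sin (φ/2 + j*(π/2))) hu
    (Real.abs_sin_le_one _) (Real.abs_sin_le_one _)
  have h2 := habs v (Real.cos (θ/2 + i*(π/2))) (Real.cos (φ/2 + j*(π/2))) hv
    (Real.abs_cos_le_one _) (Real.abs_cos_le_one _)
  set A := u * ((1/2:ℝ)^(i+j) * (Real.sin (θ/2 + i*(π/2)) * Real.sin (φ/2 + j*(π/2))))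
  set B := v * ((1/2:ℝ)^(i+j) * (Real.cos (θ/2 + i*(π/2)) * Real.cos (φ/2 + j*(π/2))))
  have : (0:ℝ) - A - B = -(A + B) := by ring
  rw [this, abs_neg]
  calc |A + B| ≤ |A| + |B| := abs_add_le _ _
  _ ≤ 1 := by linarith


noncomputable def prodA (u v : ℝ) (L : List (ℕ × ℕ)) (θ φ : ℝ) : ℝ :=
  (L.map fun p => qd u v p.1 p.2 θ φ).prod

@[simp] lemma prodA_nil (u v θ φ : ℝ) : prodA u v [] θ φ = 1 := rfl

lemma prodA_cons (u v θ φ : ℝ) (p : ℕ × ℕ) (L : List (ℕ × ℕ)) :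
    prodA u v (p :: L) θ φ = qd u v p.1 p.2 θ φ * prodA u v L θ φ := by
  simp [prodA]

noncomputable def Dv (u v t θ φ : ℝ) : ℝ := Real.cosh (t/2) - 1 + qfun θ φ u v

noncomputable def term (γ coef : ℝ) (a b j : ℕ) (L : List (ℕ × ℕ)) :
    ℝ → ℝ → ℝ → ℝ → ℝ → ℝ :=
  fun u v t θ φ => coef * Real.cosh (t/2)^a * Real.sinh (t/2)^b * prodA u v L θ φ *
    (Dv u v t θ φ) ^ (-γ - (j:ℝ))

def eL (L : List (ℕ × ℕ)) : ℕ := (L.filter (fun p => p.1 + p.2 = 1)).length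

inductive Rep (γ : ℝ) : ℤ → Bool → (ℝ → ℝ → ℝ → ℝ → ℝ → ℝ) → Prop
  | zero (w nz) : Rep γ w nz (fun _ _ _ _ _ => 0)
  | add {w nz f g} : Rep γ w nz f → Rep γ w nz g →
      Rep γ w nz (fun u v t θ φ => f u v t θ φ + g u v t θ φ)
  | term {w nz} (coef : ℝ) (a b j : ℕ) (L : List (ℕ × ℕ))
      (h1 : w ≤ (b:ℤ) + (eL L : ℤ) - 2*(j:ℤ))
      (h2 : (a:ℤ) + (b:ℤ) ≤ (j:ℤ) + (if L = [] then 1 else 0))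
      (h3 : nz = true → L ≠ [])
      (h4 : ∀ p ∈ L, p ≠ (0,0)) : Rep γ w nz (term γ coef a b j L)

lemma term_coef_zero (γ : ℝ) (a b j : ℕ) (L : List (ℕ × ℕ)) :
    term γ 0 a b j L = fun _ _ _ _ _ => 0 := by
  funext u v t θ φ; simp [term]

lemma Rep.of_true {γ : ℝ} {w : ℤ} {f} (nz : Bool) (h : Rep γ w true f) : Rep γ w nz f := by
  induction h with
  | zero => exact Rep.zero _ _
  | add _ _ ih1 ih2 => exact Rep.add ih1 ih2
  | term coef a b j L h1 h2 h3 h4 =>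
      exact Rep.term coef a b j L h1 h2 (fun _ => h3 rfl) h4

lemma hasDerivAt_qd_theta (u v : ℝ) (i j : ℕ) (θ φ : ℝ) :
    HasDerivAt (fun θ' => qd u v i j θ' φ) (qd u v (i+1) j θ φ) θ := by
  have h0 : HasDerivAt (fun θ' : ℝ => θ'/2 + i*(π/2)) (1/2) θ := by
    simpa using ((hasDerivAt_id θ).div_const 2).add_const ((i:ℝ)*(π/2))
  have hs : HasDerivAt (fun θ' => Real.sin (θ'/2 + i*(π/2)))
      (Real.cos (θ/2 + i*(π/2)) * (1/2)) θ := (Real.hasDerivAt_sin _).comp θ h0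
  have hc : HasDerivAt (fun θ' => Real.cos (θ'/2 + i*(π/2)))
      (-Real.sin (θ/2 + i*(π/2)) * (1/2)) θ := (Real.hasDerivAt_cos _).comp θ h0
  have hA : HasDerivAt (fun θ' => u * ((1/2:ℝ)^(i+j) *
      (Real.sin (θ'/2 + i*(π/2)) * Real.sin (φ/2 + j*(π/2)))))
      (u * ((1/2:ℝ)^(i+j) * ((Real.cos (θ/2 + i*(π/2)) * (1/2)) * Real.sin (φ/2 + j*(π/2))))) θ :=
    ((hs.mul_const _).const_mul _).const_mul _
  have hB : HasDerivAt (fun θ' => v * ((1/2:ℝ)^(i+j) *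
      (Real.cos (θ'/2 + i*(π/2)) * Real.cos (φ/2 + j*(π/2)))))
      (v * ((1/2:ℝ)^(i+j) * ((-Real.sin (θ/2 + i*(π/2)) * (1/2)) * Real.cos (φ/2 + j*(π/2))))) θ :=
    ((hc.mul_const _).const_mul _).const_mul _
  have H := ((hasDerivAt_const θ ((if i = 0 ∧ j = 0 then (1:ℝ) else 0))).sub hA).sub hB
  refine H.congr_deriv (Eq.symm ?_)
  have e1 : θ/2 + ((i+1:ℕ):ℝ)*(π/2) = (θ/2 + i*(π/2)) + π/2 := by push_cast; ring
  have e2 : (1/2:ℝ)^(i+1+j) = (1/2:ℝ)^(i+j) * (1/2) := by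
    rw [show i+1+j = (i+j)+1 by omega, pow_succ]
  simp only [qd, if_neg (by omega : ¬(i+1 = 0 ∧ j = 0)), e1, e2,
    Real.sin_add_pi_div_two, Real.cos_add_pi_div_two]
  ring

lemma hasDerivAt_qd_phi (u v : ℝ) (i j : ℕ) (θ φ : ℝ) :
    HasDerivAt (fun φ' => qd u v i j θ φ') (qd u v i (j+1) θ φ) φ := by
  have h0 : HasDerivAt (fun φ' : ℝ => φ'/2 + j*(π/2)) (1/2) φ := by
    simpa using ((hasDerivAt_id φ).div_const 2).add_const ((j:ℝ)*(π/2))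
  have hs : HasDerivAt (fun φ' => Real.sin (φ'/2 + j*(π/2)))
      (Real.cos (φ/2 + j*(π/2)) * (1/2)) φ := (Real.hasDerivAt_sin _).comp φ h0
  have hc : HasDerivAt (fun φ' => Real.cos (φ'/2 + j*(π/2)))
      (-Real.sin (φ/2 + j*(π/2)) * (1/2)) φ := (Real.hasDerivAt_cos _).comp φ h0
  have hA : HasDerivAt (fun φ' => u * ((1/2:ℝ)^(i+j) *
      (Real.sin (θ/2 + i*(π/2)) * Real.sin (φ'/2 + j*(π/2)))))
      (u * ((1/2:ℝ)^(i+j) * (Real.sin (θ/2 + i*(π/2)) * (Real.cos (φ/2 + j*(π/2)) * (1/2))))) φ :=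
    ((hs.const_mul _).const_mul _).const_mul _
  have hB : HasDerivAt (fun φ' => v * ((1/2:ℝ)^(i+j) *
      (Real.cos (θ/2 + i*(π/2)) * Real.cos (φ'/2 + j*(π/2)))))
      (v * ((1/2:ℝ)^(i+j) * (Real.cos (θ/2 + i*(π/2)) * (-Real.sin (φ/2 + j*(π/2)) * (1/2))))) φ :=
    ((hc.const_mul _).const_mul _).const_mul _
  have H := ((hasDerivAt_const φ ((if i = 0 ∧ j = 0 then (1:ℝ) else 0))).sub hA).sub hB
  refine H.congr_deriv (Eq.symm ?_)
  have e1 : φ/2 + ((j+1:ℕ):ℝ)*(π/2) = (φ/2 + j*(π/2)) + π/2 := by push_cast; ring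
  have e2 : (1/2:ℝ)^(i+(j+1)) = (1/2:ℝ)^(i+j) * (1/2) := by
    rw [show i+(j+1) = (i+j)+1 by omega, pow_succ]
  simp only [qd, if_neg (by omega : ¬(i = 0 ∧ j+1 = 0)), e1, e2,
    Real.sin_add_pi_div_two, Real.cos_add_pi_div_two]
  ring

lemma hasDerivAt_Dv_t (u v t θ φ : ℝ) :
    HasDerivAt (fun t' => Dv u v t' θ φ) (Real.sinh (t/2) * (1/2)) t := by
  have h0 : HasDerivAt (fun t' : ℝ => t'/2) (1/2) t := by
    simpa using (hasDerivAt_id t).div_const 2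
  have hc : HasDerivAt (fun t' => Real.cosh (t'/2)) (Real.sinh (t/2) * (1/2)) t :=
    (Real.hasDerivAt_cosh _).comp t h0
  simpa [Dv] using (hc.sub_const 1).add_const (qfun θ φ u v)

lemma hasDerivAt_Dv_theta (u v t θ φ : ℝ) :
    HasDerivAt (fun θ' => Dv u v t θ' φ) (qd u v 1 0 θ φ) θ := by
  have h : HasDerivAt (fun θ' => qfun θ' φ u v) (qd u v 1 0 θ φ) θ := by
    have := hasDerivAt_qd_theta u v 0 0 θ φ
    simpa [funext fun θ' => qd_zero u v θ' φ] using this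
  simpa [Dv] using h.const_add (Real.cosh (t/2) - 1)

lemma hasDerivAt_Dv_phi (u v t θ φ : ℝ) :
    HasDerivAt (fun φ' => Dv u v t θ φ') (qd u v 0 1 θ φ) φ := by
  have h : HasDerivAt (fun φ' => qfun θ φ' u v) (qd u v 0 1 θ φ) φ := by
    have := hasDerivAt_qd_phi u v 0 0 θ φ
    simpa [funext fun φ' => qd_zero u v θ φ'] using this
  simpa [Dv] using h.const_add (Real.cosh (t/2) - 1)

lemma Dv_pos (hu : |u| ≤ 1) (hv : |v| ≤ 1) {t : ℝ} (ht : 0 < t) (θ φ : ℝ) :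
    0 < Dv u v t θ φ := by
  have h1 : 1 < Real.cosh (t/2) := Real.one_lt_cosh.mpr (by positivity)
  have h2 := q_nonneg (θ := θ) (φ := φ) hu hv
  unfold Dv; linarith


lemma hasDerivAt_term_t {u v t : ℝ} (θ φ : ℝ) (γ coef : ℝ) (a b j : ℕ) (L : List (ℕ × ℕ))
    (hu : |u| ≤ 1) (hv : |v| ≤ 1) (ht : 0 < t) :
    HasDerivAt (fun t' => term γ coef a b j L u v t' θ φ)
      (term γ (coef*a/2) (a-1) (b+1) j L u v t θ φ
        + term γ (coef*b/2) (a+1) (b-1) j L u v t θ φ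
        + term γ (coef*(-γ-(j:ℝ))/2) a (b+1) (j+1) L u v t θ φ) t := by
  have hDpos := Dv_pos hu hv ht θ φ
  have h0 : HasDerivAt (fun t' : ℝ => t'/2) (1/2) t := by
    simpa using (hasDerivAt_id t).div_const 2
  have hc : HasDerivAt (fun t' => Real.cosh (t'/2)) (Real.sinh (t/2) * (1/2)) t :=
    (Real.hasDerivAt_cosh _).comp t h0
  have hs : HasDerivAt (fun t' => Real.sinh (t'/2)) (Real.cosh (t/2) * (1/2)) t :=
    (Real.hasDerivAt_sinh _).comp t h0
  have hDp : HasDerivAt (fun t' => (Dv u v t' θ φ) ^ (-γ - (j:ℝ)))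
      ((Real.sinh (t/2) * (1/2)) * (-γ - (j:ℝ)) * (Dv u v t θ φ) ^ (-γ - (j:ℝ) - 1)) t :=
    (hasDerivAt_Dv_t u v t θ φ).rpow_const (Or.inl hDpos.ne')
  have H := ((((hc.pow a).const_mul coef).mul (hs.pow b)).mul_const
    (prodA u v L θ φ)).mul hDp
  simp only [term]
  refine H.congr_deriv (Eq.symm ?_)
  have e1 : -γ - ((j+1:ℕ):ℝ) = (-γ - (j:ℝ)) - 1 := by push_cast; ring
  simp only [e1, pow_succ, Pi.pow_apply, Pi.mul_apply]
  ring

lemma repDerivT {γ : ℝ} {w : ℤ} {nz : Bool} {f} (h : Rep γ w nz f) :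
    ∃ g, Rep γ (w-1) nz g ∧ ∀ u v t θ φ : ℝ, |u| ≤ 1 → |v| ≤ 1 → 0 < t →
      HasDerivAt (fun t' => f u v t' θ φ) (g u v t θ φ) t := by
  induction h with
  | zero =>
      exact ⟨(fun _ _ _ _ _ => 0), Rep.zero _ _, fun u v t θ φ _ _ _ => hasDerivAt_const _ _⟩
  | add hf hg ihf ihg =>
      obtain ⟨g1, hg1, hd1⟩ := ihf
      obtain ⟨g2, hg2, hd2⟩ := ihg
      exact ⟨fun u v t θ φ => g1 u v t θ φ + g2 u v t θ φ, Rep.add hg1 hg2,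
        fun u v t θ φ hu hv ht => (hd1 u v t θ φ hu hv ht).add (hd2 u v t θ φ hu hv ht)⟩
  | term coef a b j L h1 h2 h3 h4 =>
      refine ⟨fun u v t θ φ =>
        term γ (coef*a/2) (a-1) (b+1) j L u v t θ φ
        + term γ (coef*b/2) (a+1) (b-1) j L u v t θ φ
        + term γ (coef*(-γ-(j:ℝ))/2) a (b+1) (j+1) L u v t θ φ, ?_,
        fun u v t θ φ hu hv ht => hasDerivAt_term_t θ φ γ coef a b j L hu hv ht⟩
      have r3 : Rep γ (w-1) nz (term γ (coef*(-γ-(j:ℝ))/2) a (b+1) (j+1) L) :=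
        Rep.term _ a (b+1) (j+1) L (by push_cast; omega) (by push_cast; omega) h3 h4
      have r1 : Rep γ (w-1) nz (term γ (coef*a/2) (a-1) (b+1) j L) := by
        rcases Nat.eq_zero_or_pos a with ha | ha
        · subst ha
          simp only [Nat.cast_zero, mul_zero, zero_div, term_coef_zero]
          exact Rep.zero _ _
        · refine Rep.term _ (a-1) (b+1) j L (by push_cast; omega) ?_ h3 h4
          have : ((a-1:ℕ):ℤ) = (a:ℤ) - 1 := by omega
          rw [this]; omega
      have r2 : Rep γ (w-1) nz (term γ (coef*b/2) (a+1) (b-1) j L) := by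
        rcases Nat.eq_zero_or_pos b with hb | hb
        · subst hb
          simp only [Nat.cast_zero, mul_zero, zero_div, term_coef_zero]
          exact Rep.zero _ _
        · refine Rep.term _ (a+1) (b-1) j L ?_ ?_ h3 h4
          · have : ((b-1:ℕ):ℤ) = (b:ℤ) - 1 := by omega
            rw [this]; omega
          · have : ((b-1:ℕ):ℤ) = (b:ℤ) - 1 := by omega
            rw [this]; push_cast; omega
      exact Rep.add (Rep.add r1 r2) r3


lemma Rep.congr {γ : ℝ} {w : ℤ} {nz : Bool} {f g} (h : Rep γ w nz f)
    (e : ∀ u v t θ φ : ℝ, f u v t θ φ = g u v t θ φ) : Rep γ w nz g := by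
  have : f = g := funext fun u => funext fun v => funext fun t => funext fun θ =>
    funext fun φ => e u v t θ φ
  exact this ▸ h

lemma term_cons (γ coef : ℝ) (a b j : ℕ) (p : ℕ × ℕ) (L : List (ℕ × ℕ)) (u v t θ φ : ℝ) :
    term γ coef a b j (p :: L) u v t θ φ =
      qd u v p.1 p.2 θ φ * term γ coef a b j L u v t θ φ := by
  simp only [term, prodA_cons]; ring

lemma eL_cons (p : ℕ × ℕ) (L : List (ℕ × ℕ)) :
    eL (p :: L) = if p.1 + p.2 = 1 then eL L + 1 else eL L := by
  simp only [eL, List.filter_cons]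
  split <;> simp_all

lemma Rep.mul_atom {γ : ℝ} {w : ℤ} {g} (p : ℕ × ℕ) (hp : p ≠ (0,0)) (h : Rep γ w true g) :
    Rep γ (w + (if p.1 + p.2 = 1 then 1 else 0)) true
      (fun u v t θ φ => qd u v p.1 p.2 θ φ * g u v t θ φ) := by
  induction h with
  | zero => exact Rep.congr (Rep.zero _ _) (by intro u v t θ φ; simp)
  | add h1 h2 ih1 ih2 => exact Rep.congr (Rep.add ih1 ih2) (by intro u v t θ φ; simp; ring)
  | term coef a b j L h1 h2 h3 h4 =>
      have hL := h3 rfl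
      refine Rep.congr (Rep.term coef a b j (p :: L) ?_ ?_ (fun _ => by simp) ?_)
        (fun u v t θ φ => term_cons γ coef a b j p L u v t θ φ)
      · rw [eL_cons]; split <;> simp_all <;> push_cast <;> omega
      · rw [if_neg hL] at h2; simp; omega
      · intro q hq
        rcases List.mem_cons.mp hq with rfl | hq
        · exact hp
        · exact h4 q hq

lemma termDerivTheta (γ : ℝ) : ∀ (L : List (ℕ × ℕ)) (coef : ℝ) (a b j : ℕ) (w : ℤ),
    w ≤ (b:ℤ) + (eL L:ℤ) - 2*(j:ℤ) →
    (a:ℤ) + (b:ℤ) ≤ (j:ℤ) + (if L = [] then 1 else 0) →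
    (∀ p ∈ L, p ≠ (0,0)) →
    ∃ g, Rep γ (w-1) true g ∧ ∀ u v t θ φ : ℝ, |u| ≤ 1 → |v| ≤ 1 → 0 < t →
      HasDerivAt (fun θ' => term γ coef a b j L u v t θ' φ) (g u v t θ φ) θ := by
  intro L
  induction L with
  | nil =>
    intro coef a b j w h1 h2 h4
    refine ⟨term γ (coef*(-γ-(j:ℝ))) a b (j+1) [(1,0)], ?_, ?_⟩
    · refine Rep.term _ a b (j+1) [(1,0)] ?_ ?_ (fun _ => by simp) (by simp)
      · simp only [eL, List.filter] at h1 ⊢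
        simp at h1 ⊢; push_cast; omega
      · simp at h2 ⊢; push_cast at h2 ⊢; omega
    · intro u v t θ φ hu hv ht
      have hDpos := Dv_pos hu hv ht θ φ
      have hDp : HasDerivAt (fun θ' => (Dv u v t θ' φ) ^ (-γ - (j:ℝ)))
          ((qd u v 1 0 θ φ) * (-γ - (j:ℝ)) * (Dv u v t θ φ) ^ (-γ - (j:ℝ) - 1)) θ :=
        (hasDerivAt_Dv_theta u v t θ φ).rpow_const (Or.inl hDpos.ne')
      have H := hDp.const_mul (coef * Real.cosh (t/2)^a * Real.sinh (t/2)^b)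
      simp only [term, prodA_nil, mul_one]
      refine H.congr_deriv (Eq.symm ?_)
      simp only [prodA_cons, prodA_nil]
      have e1 : -γ - ((j+1:ℕ):ℝ) = (-γ - (j:ℝ)) - 1 := by push_cast; ring
      rw [e1]; ring
  | cons p L ih =>
    intro coef a b j w h1 h2 h4
    have hp : p ≠ (0,0) := h4 p List.mem_cons_self
    have h4' : ∀ q ∈ L, q ≠ (0,0) := fun q hq => h4 q (List.mem_cons_of_mem _ hq)
    have h2' : (a:ℤ)+(b:ℤ) ≤ (j:ℤ) + (if L = [] then 1 else 0) := by
      rw [if_neg (by simp : ¬ (p :: L = []))] at h2; split <;> omega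
    set k : ℤ := if p.1 + p.2 = 1 then 1 else 0 with hk
    have h1' : (w - k) ≤ (b:ℤ) + (eL L:ℤ) - 2*(j:ℤ) := by
      rw [eL_cons] at h1
      by_cases hc : p.1 + p.2 = 1
      · rw [if_pos hc] at h1; rw [hk, if_pos hc]; push_cast at h1 ⊢; omega
      · rw [if_neg hc] at h1; rw [hk, if_neg hc]; push_cast at h1 ⊢; omega
    obtain ⟨g', hg', hd'⟩ := ih coef a b j (w - k) h1' h2' h4'
    refine ⟨fun u v t θ φ => term γ coef a b j ((p.1+1, p.2) :: L) u v t θ φ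
        + qd u v p.1 p.2 θ φ * g' u v t θ φ, ?_, ?_⟩
    · apply Rep.add
      · refine Rep.term coef a b j ((p.1+1, p.2) :: L) ?_ ?_ (fun _ => by simp) ?_
        · have hp' : ¬(p.1 = 0 ∧ p.2 = 0) := fun hc => hp (Prod.ext hc.1 hc.2)
          have hne : ¬ ((p.1+1, p.2).1 + (p.1+1, p.2).2 = 1) := by
            show ¬ (p.1+1+p.2 = 1); omega
          rw [eL_cons, if_neg hne]
          rw [eL_cons] at h1
          by_cases hc : p.1 + p.2 = 1
          · rw [if_pos hc] at h1; push_cast at h1 ⊢; omega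
          · rw [if_neg hc] at h1; push_cast at h1 ⊢; omega
        · rw [if_neg (by simp : ¬ (p :: L = []))] at h2
          rw [if_neg (by simp : ¬ ((p.1+1, p.2) :: L = []))]; omega
        · intro q hq
          rcases List.mem_cons.mp hq with rfl | hq
          · simp
          · exact h4' q hq
      · have H := Rep.mul_atom p hp hg'
        rw [← hk] at H
        have : w - k - 1 + k = w - 1 := by ring
        rwa [this] at H
    · intro u v t θ φ hu hv ht
      have hqd := hasDerivAt_qd_theta u v p.1 p.2 θ φ
      have H := hqd.mul (hd' u v t θ φ hu hv ht)
      have feq : (fun θ' => term γ coef a b j (p :: L) u v t θ' φ)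
          = (fun θ' => qd u v p.1 p.2 θ' φ * term γ coef a b j L u v t θ' φ) :=
        funext fun θ' => term_cons γ coef a b j p L u v t θ' φ
      rw [feq]
      refine H.congr_deriv (Eq.symm ?_)
      show term γ coef a b j ((p.1+1, p.2) :: L) u v t θ φ
        + qd u v p.1 p.2 θ φ * g' u v t θ φ = _
      rw [term_cons]


lemma repDerivTheta {γ : ℝ} {w : ℤ} {nz : Bool} {f} (h : Rep γ w nz f) :
    ∃ g, Rep γ (w-1) true g ∧ ∀ u v t θ φ : ℝ, |u| ≤ 1 → |v| ≤ 1 → 0 < t →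
      HasDerivAt (fun θ' => f u v t θ' φ) (g u v t θ φ) θ := by
  induction h with
  | zero =>
      exact ⟨(fun _ _ _ _ _ => 0), Rep.zero _ _, fun u v t θ φ _ _ _ => hasDerivAt_const _ _⟩
  | add hf hg ihf ihg =>
      obtain ⟨g1, hg1, hd1⟩ := ihf
      obtain ⟨g2, hg2, hd2⟩ := ihg
      exact ⟨fun u v t θ φ => g1 u v t θ φ + g2 u v t θ φ, Rep.add hg1 hg2,
        fun u v t θ φ hu hv ht => (hd1 u v t θ φ hu hv ht).add (hd2 u v t θ φ hu hv ht)⟩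
  | term coef a b j L h1 h2 h3 h4 =>
      exact termDerivTheta γ L coef a b j _ h1 h2 h4

lemma termDerivPhi (γ : ℝ) : ∀ (L : List (ℕ × ℕ)) (coef : ℝ) (a b j : ℕ) (w : ℤ),
    w ≤ (b:ℤ) + (eL L:ℤ) - 2*(j:ℤ) →
    (a:ℤ) + (b:ℤ) ≤ (j:ℤ) + (if L = [] then 1 else 0) →
    (∀ p ∈ L, p ≠ (0,0)) →
    ∃ g, Rep γ (w-1) true g ∧ ∀ u v t θ φ : ℝ, |u| ≤ 1 → |v| ≤ 1 → 0 < t →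
      HasDerivAt (fun φ' => term γ coef a b j L u v t θ φ') (g u v t θ φ) φ := by
  intro L
  induction L with
  | nil =>
    intro coef a b j w h1 h2 h4
    refine ⟨term γ (coef*(-γ-(j:ℝ))) a b (j+1) [(0,1)], ?_, ?_⟩
    · refine Rep.term _ a b (j+1) [(0,1)] ?_ ?_ (fun _ => by simp) (by simp)
      · simp only [eL, List.filter] at h1 ⊢
        simp at h1 ⊢; push_cast; omega
      · simp at h2 ⊢; push_cast at h2 ⊢; omega
    · intro u v t θ φ hu hv ht
      have hDpos := Dv_pos hu hv ht θ φ
      have hDp : HasDerivAt (fun φ' => (Dv u v t θ φ') ^ (-γ - (j:ℝ)))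
          ((qd u v 0 1 θ φ) * (-γ - (j:ℝ)) * (Dv u v t θ φ) ^ (-γ - (j:ℝ) - 1)) φ :=
        (hasDerivAt_Dv_phi u v t θ φ).rpow_const (Or.inl hDpos.ne')
      have H := hDp.const_mul (coef * Real.cosh (t/2)^a * Real.sinh (t/2)^b)
      simp only [term, prodA_nil, mul_one]
      refine H.congr_deriv (Eq.symm ?_)
      simp only [prodA_cons, prodA_nil]
      have e1 : -γ - ((j+1:ℕ):ℝ) = (-γ - (j:ℝ)) - 1 := by push_cast; ring
      rw [e1]; ring
  | cons p L ih =>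
    intro coef a b j w h1 h2 h4
    have hp : p ≠ (0,0) := h4 p List.mem_cons_self
    have h4' : ∀ q ∈ L, q ≠ (0,0) := fun q hq => h4 q (List.mem_cons_of_mem _ hq)
    have h2' : (a:ℤ)+(b:ℤ) ≤ (j:ℤ) + (if L = [] then 1 else 0) := by
      rw [if_neg (by simp : ¬ (p :: L = []))] at h2; split <;> omega
    set k : ℤ := if p.1 + p.2 = 1 then 1 else 0 with hk
    have h1' : (w - k) ≤ (b:ℤ) + (eL L:ℤ) - 2*(j:ℤ) := by
      rw [eL_cons] at h1
      by_cases hc : p.1 + p.2 = 1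
      · rw [if_pos hc] at h1; rw [hk, if_pos hc]; push_cast at h1 ⊢; omega
      · rw [if_neg hc] at h1; rw [hk, if_neg hc]; push_cast at h1 ⊢; omega
    obtain ⟨g', hg', hd'⟩ := ih coef a b j (w - k) h1' h2' h4'
    refine ⟨fun u v t θ φ => term γ coef a b j ((p.1, p.2+1) :: L) u v t θ φ
        + qd u v p.1 p.2 θ φ * g' u v t θ φ, ?_, ?_⟩
    · apply Rep.add
      · refine Rep.term coef a b j ((p.1, p.2+1) :: L) ?_ ?_ (fun _ => by simp) ?_
        · have hp' : ¬(p.1 = 0 ∧ p.2 = 0) := fun hc => hp (Prod.ext hc.1 hc.2)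
          have hne : ¬ ((p.1, p.2+1).1 + (p.1, p.2+1).2 = 1) := by
            show ¬ (p.1+(p.2+1) = 1); omega
          rw [eL_cons, if_neg hne]
          rw [eL_cons] at h1
          by_cases hc : p.1 + p.2 = 1
          · rw [if_pos hc] at h1; push_cast at h1 ⊢; omega
          · rw [if_neg hc] at h1; push_cast at h1 ⊢; omega
        · rw [if_neg (by simp : ¬ (p :: L = []))] at h2
          rw [if_neg (by simp : ¬ ((p.1, p.2+1) :: L = []))]; omega
        · intro q hq
          rcases List.mem_cons.mp hq with rfl | hq
          · simp
          · exact h4' q hq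
      · have H := Rep.mul_atom p hp hg'
        rw [← hk] at H
        have : w - k - 1 + k = w - 1 := by ring
        rwa [this] at H
    · intro u v t θ φ hu hv ht
      have hqd := hasDerivAt_qd_phi u v p.1 p.2 θ φ
      have H := hqd.mul (hd' u v t θ φ hu hv ht)
      have feq : (fun φ' => term γ coef a b j (p :: L) u v t θ φ')
          = (fun φ' => qd u v p.1 p.2 θ φ' * term γ coef a b j L u v t θ φ') :=
        funext fun φ' => term_cons γ coef a b j p L u v t θ φ'
      rw [feq]
      refine H.congr_deriv (Eq.symm ?_)
      show term γ coef a b j ((p.1, p.2+1) :: L) u v t θ φ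
        + qd u v p.1 p.2 θ φ * g' u v t θ φ = _
      rw [term_cons]

lemma repDerivPhi {γ : ℝ} {w : ℤ} {nz : Bool} {f} (h : Rep γ w nz f) :
    ∃ g, Rep γ (w-1) true g ∧ ∀ u v t θ φ : ℝ, |u| ≤ 1 → |v| ≤ 1 → 0 < t →
      HasDerivAt (fun φ' => f u v t θ φ') (g u v t θ φ) φ := by
  induction h with
  | zero =>
      exact ⟨(fun _ _ _ _ _ => 0), Rep.zero _ _, fun u v t θ φ _ _ _ => hasDerivAt_const _ _⟩
  | add hf hg ihf ihg =>
      obtain ⟨g1, hg1, hd1⟩ := ihf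
      obtain ⟨g2, hg2, hd2⟩ := ihg
      exact ⟨fun u v t θ φ => g1 u v t θ φ + g2 u v t θ φ, Rep.add hg1 hg2,
        fun u v t θ φ hu hv ht => (hd1 u v t θ φ hu hv ht).add (hd2 u v t θ φ hu hv ht)⟩
  | term coef a b j L h1 h2 h3 h4 =>
      exact termDerivPhi γ L coef a b j _ h1 h2 h4


lemma cosh_le_exp {x : ℝ} (hx : 0 ≤ x) : Real.cosh x ≤ Real.exp x := by
  rw [Real.cosh_eq]
  have h := Real.exp_le_exp.mpr (neg_le_self hx)
  linarith

lemma sinh_le_cosh' (x : ℝ) : Real.sinh x ≤ Real.cosh x := by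
  rw [Real.sinh_eq, Real.cosh_eq]
  have := Real.exp_pos (-x)
  linarith

lemma exp_half_le_two : Real.exp (1/2 : ℝ) ≤ 2 := by
  have h1 : Real.exp (1/2 : ℝ) * Real.exp (1/2 : ℝ) = Real.exp 1 := by
    rw [← Real.exp_add]; norm_num
  have h2 := Real.exp_one_lt_d9
  nlinarith [Real.exp_pos (1/2 : ℝ)]

lemma cosh_sub_one (x : ℝ) : Real.cosh (2*x) - 1 = 2 * Real.sinh x ^ 2 := by
  rw [Real.cosh_two_mul, Real.cosh_sq]; ring

lemma prodA_abs_le_sqrt {u v θ φ : ℝ} (hu : |u| ≤ 1) (hv : |v| ≤ 1) (L : List (ℕ × ℕ))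
    (hL : ∀ p ∈ L, p ≠ (0,0)) :
    |prodA u v L θ φ| ≤ Real.sqrt (qfun θ φ u v) ^ (eL L) := by
  induction L with
  | nil => simp [eL]
  | cons p L ih =>
    have hp : p ≠ (0,0) := hL p List.mem_cons_self
    have hp' : ¬(p.1 = 0 ∧ p.2 = 0) := fun hc => hp (Prod.ext hc.1 hc.2)
    have ih' := ih (fun q hq => hL q (List.mem_cons_of_mem _ hq))
    rw [prodA_cons, abs_mul, eL_cons]
    by_cases hc : p.1 + p.2 = 1
    · rw [if_pos hc, pow_succ]
      have hqd : |qd u v p.1 p.2 θ φ| ≤ Real.sqrt (qfun θ φ u v) := by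
        have : (p.1 = 1 ∧ p.2 = 0) ∨ (p.1 = 0 ∧ p.2 = 1) := by omega
        rcases this with ⟨e1, e2⟩ | ⟨e1, e2⟩ <;> rw [e1, e2]
        · exact qd10_abs_le_sqrt hu hv
        · exact qd01_abs_le_sqrt hu hv
      calc |qd u v p.1 p.2 θ φ| * |prodA u v L θ φ|
          ≤ Real.sqrt (qfun θ φ u v) * (Real.sqrt (qfun θ φ u v) ^ (eL L)) :=
            mul_le_mul hqd ih' (abs_nonneg _) (Real.sqrt_nonneg _)
      _ = Real.sqrt (qfun θ φ u v) ^ (eL L) * Real.sqrt (qfun θ φ u v) := by ring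
    · rw [if_neg hc]
      have hqd : |qd u v p.1 p.2 θ φ| ≤ 1 := qd_abs_le_one hu hv hp'
      calc |qd u v p.1 p.2 θ φ| * |prodA u v L θ φ|
          ≤ 1 * (Real.sqrt (qfun θ φ u v) ^ (eL L)) :=
            mul_le_mul hqd ih' (abs_nonneg _) zero_le_one
      _ = _ := one_mul _

lemma prodA_abs_le_one {u v θ φ : ℝ} (hu : |u| ≤ 1) (hv : |v| ≤ 1) (L : List (ℕ × ℕ))
    (hL : ∀ p ∈ L, p ≠ (0,0)) : |prodA u v L θ φ| ≤ 1 := by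
  induction L with
  | nil => simp
  | cons p L ih =>
    have hp : p ≠ (0,0) := hL p List.mem_cons_self
    have hp' : ¬(p.1 = 0 ∧ p.2 = 0) := fun hc => hp (Prod.ext hc.1 hc.2)
    have ih' := ih (fun q hq => hL q (List.mem_cons_of_mem _ hq))
    rw [prodA_cons, abs_mul]
    calc |qd u v p.1 p.2 θ φ| * |prodA u v L θ φ| ≤ 1 * 1 :=
      mul_le_mul (qd_abs_le_one hu hv hp') ih' (abs_nonneg _) zero_le_one
    _ = 1 := one_mul _


set_option maxHeartbeats 2000000 in
lemma repBound {γ : ℝ} (hγ : 1 ≤ γ) {w : ℤ} (hw : w ≤ 0) {f} (h : Rep γ w true f) :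
    ∃ C : ℝ, 0 < C ∧ ∀ u v t θ φ : ℝ, |u| ≤ 1 → |v| ≤ 1 → 0 < t →
      (t ≤ 1 → |f u v t θ φ| ≤ C * (t^2 + qfun θ φ u v) ^ ((w:ℝ)/2 - γ)) ∧
      (1 < t → |f u v t θ φ| ≤ C * Real.exp (-t/4)) := by
  revert hw
  induction h with
  | zero =>
      intro hw
      refine ⟨1, one_pos, fun u v t θ φ hu hv ht => ⟨fun ht1 => ?_, fun ht1 => ?_⟩⟩
      · show |(0:ℝ)| ≤ _
        rw [abs_zero]
        have hq := q_nonneg hu hv (θ := θ) (φ := φ)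
        have h := Real.rpow_nonneg
          (show (0:ℝ) ≤ t^2 + qfun θ φ u v by nlinarith [sq_nonneg t]) (((w:ℝ))/2 - γ)
        linarith
      · show |(0:ℝ)| ≤ _
        rw [abs_zero]
        have := Real.exp_pos (-t/4)
        linarith
  | add hf' hg' ih1 ih2 =>
      intro hw
      obtain ⟨C1, hC1, hb1⟩ := ih1 hw
      obtain ⟨C2, hC2, hb2⟩ := ih2 hw
      refine ⟨C1 + C2, by positivity, fun u v t θ φ hu hv ht => ⟨fun ht1 => ?_, fun ht1 => ?_⟩⟩
      · have e1 := (hb1 u v t θ φ hu hv ht).1 ht1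
        have e2 := (hb2 u v t θ φ hu hv ht).1 ht1
        calc |_ + _| ≤ _ := abs_add_le _ _
        _ ≤ C1 * (t^2 + qfun θ φ u v) ^ ((w:ℝ)/2 - γ)
            + C2 * (t^2 + qfun θ φ u v) ^ ((w:ℝ)/2 - γ) := add_le_add e1 e2
        _ = (C1 + C2) * (t^2 + qfun θ φ u v) ^ ((w:ℝ)/2 - γ) := by ring
      · have e1 := (hb1 u v t θ φ hu hv ht).2 ht1
        have e2 := (hb2 u v t θ φ hu hv ht).2 ht1
        calc |_ + _| ≤ _ := abs_add_le _ _
        _ ≤ C1 * Real.exp (-t/4) + C2 * Real.exp (-t/4) := add_le_add e1 e2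
        _ = (C1 + C2) * Real.exp (-t/4) := by ring
  | term coef a b j L h1 h2 h3 h4 =>
      intro hw
      have hL := h3 rfl
      set X : ℝ := ((b:ℝ) + (eL L : ℝ))/2 - γ - (j:ℝ) with hX
      set Y : ℝ := ((w:ℝ))/2 - γ with hY
      have he1 : Real.exp (-(1:ℝ)/2) < 1 := Real.exp_lt_one_iff.mpr (by norm_num)
      set κ : ℝ := (1 - Real.exp (-(1:ℝ)/2))^2/2 with hκ
      have hκ0 : 0 < κ := by
        have h0 : 0 < 1 - Real.exp (-(1:ℝ)/2) := by linarith
        positivity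
      have hYneg : Y ≤ -1 := by
        rw [hY]
        have : ((w:ℝ)) ≤ 0 := by exact_mod_cast hw
        linarith
      have hXY : Y ≤ X := by
        rw [hX, hY]
        have h1' : (w:ℝ) ≤ (b:ℝ) + (eL L:ℝ) - 2*(j:ℝ) := by exact_mod_cast h1
        linarith
      refine ⟨(|coef| * 2^a * Real.sqrt 3 ^ b) * 4^(X - Y) * 8^(-Y)
        + |coef| * κ ^ (-γ - (j:ℝ)) + 1, by positivity, fun u v t θ φ hu hv ht => ?_⟩
      have hq0 : 0 ≤ qfun θ φ u v := q_nonneg hu hv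
      have hq2 : qfun θ φ u v ≤ 2 := q_le_two hu hv
      have hD0 : 0 < Dv u v t θ φ := Dv_pos hu hv ht θ φ
      have hcosh0 : (0:ℝ) < Real.cosh (t/2) := Real.cosh_pos _
      have hsinh0 : 0 ≤ Real.sinh (t/2) := by
        rw [Real.sinh_eq]
        have := Real.exp_le_exp.mpr (neg_le_self (by positivity : (0:ℝ) ≤ t/2))
        linarith
      have hP1 : |prodA u v L θ φ| ≤ 1 := prodA_abs_le_one hu hv L h4
      have hPq : |prodA u v L θ φ| ≤ Real.sqrt (qfun θ φ u v) ^ (eL L) :=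
        prodA_abs_le_sqrt hu hv L h4
      have hc1 : 1 ≤ Real.cosh (t/2) := Real.one_le_cosh _
      have hcosh_sub : Real.cosh (t/2) - 1 = 2 * Real.sinh (t/4)^2 := by
        rw [show t/2 = 2*(t/4) by ring, cosh_sub_one]
      have e_abs : |term γ coef a b j L u v t θ φ| =
          |coef| * Real.cosh (t/2)^a * Real.sinh (t/2)^b * |prodA u v L θ φ| *
            (Dv u v t θ φ) ^ (-γ - (j:ℝ)) := by
        simp only [term, abs_mul, abs_pow]
        rw [abs_of_pos hcosh0, abs_of_nonneg hsinh0,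
          abs_of_nonneg (Real.rpow_nonneg hD0.le _)]
      have hCs0 : 0 ≤ (|coef| * 2^a * Real.sqrt 3 ^ b) := by positivity
      constructor
      · -- small time
        intro ht1
        have hcosh2 : Real.cosh (t/2) ≤ 2 := by
          calc Real.cosh (t/2) ≤ Real.exp (t/2) := cosh_le_exp (by positivity)
          _ ≤ Real.exp (1/2 : ℝ) := Real.exp_le_exp.mpr (by linarith)
          _ ≤ 2 := exp_half_le_two
        have hDle : Dv u v t θ φ ≤ 4 := by
          simp only [Dv]; linarith
        have hsinh_sq : Real.sinh (t/2)^2 ≤ 3 * Dv u v t θ φ := by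
          have hss := Real.sinh_sq (t/2)
          simp only [Dv]; nlinarith
        have hsinh_le : Real.sinh (t/2) ≤ Real.sqrt 3 * Real.sqrt (Dv u v t θ φ) := by
          have h5 := Real.sqrt_le_sqrt hsinh_sq
          rw [Real.sqrt_sq hsinh0] at h5
          rwa [Real.sqrt_mul (by norm_num : (0:ℝ) ≤ 3)] at h5
        have hsq_le : Real.sqrt (qfun θ φ u v) ≤ Real.sqrt (Dv u v t θ φ) := by
          apply Real.sqrt_le_sqrt; simp only [Dv]; linarith
        have htq0 : 0 < t^2 + qfun θ φ u v := by positivity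
        have hD_low : (t^2 + qfun θ φ u v)/8 ≤ Dv u v t θ φ := by
          have hs4 : t/4 ≤ Real.sinh (t/4) := Real.self_le_sinh_iff.mpr (by positivity)
          have h5 : t^2/8 ≤ Real.cosh (t/2) - 1 := by rw [hcosh_sub]; nlinarith
          simp only [Dv]; linarith
        have hPD : |prodA u v L θ φ| ≤ Real.sqrt (Dv u v t θ φ) ^ (eL L) :=
          hPq.trans (pow_le_pow_left₀ (Real.sqrt_nonneg _) hsq_le _)
        have step1 : |term γ coef a b j L u v t θ φ| ≤
            |coef| * 2^a * (Real.sqrt 3 * Real.sqrt (Dv u v t θ φ))^b *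
              Real.sqrt (Dv u v t θ φ) ^ (eL L) * (Dv u v t θ φ) ^ (-γ - (j:ℝ)) := by
          rw [e_abs]
          gcongr
        have e3 : Real.sqrt (Dv u v t θ φ) ^ (b + eL L)
            = (Dv u v t θ φ) ^ (((b:ℝ) + (eL L:ℝ))/2) := by
          rw [Real.sqrt_eq_rpow,
            ← Real.rpow_natCast ((Dv u v t θ φ) ^ ((1:ℝ)/2)) (b + eL L),
            ← Real.rpow_mul hD0.le]
          congr 1; push_cast; ring
        have e4 : (Dv u v t θ φ) ^ (((b:ℝ) + (eL L:ℝ))/2) * (Dv u v t θ φ) ^ (-γ - (j:ℝ))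
            = (Dv u v t θ φ) ^ X := by
          rw [← Real.rpow_add hD0]; congr 1; rw [hX]; ring
        have step2 : |coef| * 2^a * (Real.sqrt 3 * Real.sqrt (Dv u v t θ φ))^b *
              Real.sqrt (Dv u v t θ φ) ^ (eL L) * (Dv u v t θ φ) ^ (-γ - (j:ℝ))
            = (|coef| * 2^a * Real.sqrt 3 ^ b) * (Dv u v t θ φ) ^ X := by
          calc |coef| * 2^a * (Real.sqrt 3 * Real.sqrt (Dv u v t θ φ))^b *
              Real.sqrt (Dv u v t θ φ) ^ (eL L) * (Dv u v t θ φ) ^ (-γ - (j:ℝ))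
              = (|coef| * 2^a * Real.sqrt 3 ^ b) *
                (Real.sqrt (Dv u v t θ φ) ^ (b + eL L) * (Dv u v t θ φ) ^ (-γ - (j:ℝ))) := by
                rw [mul_pow, pow_add]; ring
          _ = _ := by rw [e3, e4]
        have step3 : (Dv u v t θ φ) ^ X ≤ 4^(X-Y) * (Dv u v t θ φ) ^ Y := by
          have e5 : (Dv u v t θ φ) ^ X = (Dv u v t θ φ) ^ (X-Y) * (Dv u v t θ φ) ^ Y := by
            rw [← Real.rpow_add hD0]; congr 1; ring
          rw [e5]
          have h6 : (Dv u v t θ φ) ^ (X-Y) ≤ (4:ℝ)^(X-Y) :=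
            Real.rpow_le_rpow hD0.le hDle (by linarith)
          exact mul_le_mul_of_nonneg_right h6 (Real.rpow_nonneg hD0.le _)
        have step4 : (Dv u v t θ φ) ^ Y ≤ 8^(-Y) * (t^2 + qfun θ φ u v) ^ Y := by
          have h48 : (Dv u v t θ φ) ^ Y ≤ ((t^2 + qfun θ φ u v)/8) ^ Y :=
            Real.rpow_le_rpow_of_nonpos (by positivity) hD_low (by linarith)
          calc (Dv u v t θ φ) ^ Y ≤ ((t^2 + qfun θ φ u v)/8) ^ Y := h48
          _ = (t^2 + qfun θ φ u v) ^ Y / 8 ^ Y :=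
              Real.div_rpow htq0.le (by norm_num : (0:ℝ) ≤ 8) Y
          _ = 8^(-Y) * (t^2 + qfun θ φ u v) ^ Y := by
              rw [Real.rpow_neg (by norm_num : (0:ℝ) ≤ 8)]; ring
        calc |term γ coef a b j L u v t θ φ|
            ≤ (|coef| * 2^a * Real.sqrt 3 ^ b) * (Dv u v t θ φ) ^ X := by
              rw [← step2]; exact step1
        _ ≤ (|coef| * 2^a * Real.sqrt 3 ^ b) * (4^(X-Y) * (Dv u v t θ φ) ^ Y) :=
              mul_le_mul_of_nonneg_left step3 hCs0
        _ ≤ (|coef| * 2^a * Real.sqrt 3 ^ b) *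
              (4^(X-Y) * (8^(-Y) * (t^2 + qfun θ φ u v) ^ Y)) := by
              have h7 : (0:ℝ) ≤ 4^(X-Y) := Real.rpow_nonneg (by norm_num) _
              exact mul_le_mul_of_nonneg_left
                (mul_le_mul_of_nonneg_left step4 h7) hCs0
        _ = ((|coef| * 2^a * Real.sqrt 3 ^ b) * 4^(X-Y) * 8^(-Y)) *
              (t^2 + qfun θ φ u v) ^ Y := by ring
        _ ≤ ((|coef| * 2^a * Real.sqrt 3 ^ b) * 4^(X - Y) * 8^(-Y)
              + |coef| * κ ^ (-γ - (j:ℝ)) + 1) * (t^2 + qfun θ φ u v) ^ Y := by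
              have h8 : 0 ≤ (t^2 + qfun θ φ u v) ^ Y := Real.rpow_nonneg htq0.le _
              have h9 : 0 ≤ |coef| * κ ^ (-γ - (j:ℝ)) := by positivity
              nlinarith
      · -- large time
        intro ht1
        have hexp0 : (0:ℝ) < Real.exp (t/2) := Real.exp_pos _
        have hcosh_exp : Real.cosh (t/2) ≤ Real.exp (t/2) := cosh_le_exp (by positivity)
        have hsinh_exp : Real.sinh (t/2) ≤ Real.exp (t/2) := (sinh_le_cosh' _).trans hcosh_exp
        have hDlow : κ * Real.exp (t/2) ≤ Dv u v t θ φ := by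
          have h5 : Real.exp (t/4) * (1 - Real.exp (-(1:ℝ)/2)) / 2 ≤ Real.sinh (t/4) := by
            rw [Real.sinh_eq]
            have e5 : Real.exp (-(t/4)) = Real.exp (t/4) * Real.exp (-(t/2)) := by
              rw [← Real.exp_add]; ring_nf
            have e6 : Real.exp (-(t/2)) ≤ Real.exp (-(1:ℝ)/2) :=
              Real.exp_le_exp.mpr (by linarith)
            rw [e5]
            nlinarith [Real.exp_pos (t/4)]
          have h6 : 0 ≤ Real.exp (t/4) * (1 - Real.exp (-(1:ℝ)/2)) / 2 := by
            have h0 : 0 < 1 - Real.exp (-(1:ℝ)/2) := by linarith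
            positivity
          have h7 : Real.exp (t/4)^2 = Real.exp (t/2) := by
            rw [sq, ← Real.exp_add]; ring_nf
          have h8 := pow_le_pow_left₀ h6 h5 2
          have h9 : κ * Real.exp (t/2) ≤ 2 * Real.sinh (t/4)^2 := by
            rw [hκ]; nlinarith
          simp only [Dv]
          rw [show Real.cosh (t/2) - 1 + qfun θ φ u v
            = (Real.cosh (t/2) - 1) + qfun θ φ u v by ring, hcosh_sub]
          linarith
        have hDr : (Dv u v t θ φ) ^ (-γ - (j:ℝ)) ≤ (κ * Real.exp (t/2)) ^ (-γ - (j:ℝ)) := by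
          apply Real.rpow_le_rpow_of_nonpos (by positivity) hDlow
          have : (0:ℝ) ≤ (j:ℝ) := by positivity
          linarith
        have m1 : |coef| * Real.cosh (t/2)^a * Real.sinh (t/2)^b * |prodA u v L θ φ|
            ≤ |coef| * Real.exp (t/2)^a * Real.exp (t/2)^b * 1 := by
          gcongr
        have hbound : |term γ coef a b j L u v t θ φ| ≤
            (|coef| * Real.exp (t/2)^a * Real.exp (t/2)^b * 1) *
              ((κ * Real.exp (t/2)) ^ (-γ - (j:ℝ))) := by
          rw [e_abs]
          exact mul_le_mul m1 hDr (Real.rpow_nonneg hD0.le _) (by positivity)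
        have hsplit : (κ * Real.exp (t/2)) ^ (-γ - (j:ℝ))
            = κ ^ (-γ - (j:ℝ)) * Real.exp (t/2) ^ (-γ - (j:ℝ)) :=
          Real.mul_rpow hκ0.le hexp0.le
        have hZ : ((a:ℝ) + (b:ℝ)) + (-γ - (j:ℝ)) ≤ -1 := by
          rw [if_neg hL] at h2
          have h2' : (a:ℝ) + (b:ℝ) ≤ (j:ℝ) := by exact_mod_cast h2
          linarith
        have hcollect : Real.exp (t/2)^a * Real.exp (t/2)^b * Real.exp (t/2) ^ (-γ - (j:ℝ))
            ≤ Real.exp (-t/4) := by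
          have e7 : Real.exp (t/2)^a * Real.exp (t/2)^b * Real.exp (t/2) ^ (-γ - (j:ℝ))
              = Real.exp (t/2) ^ (((a:ℝ) + (b:ℝ)) + (-γ - (j:ℝ))) := by
            rw [Real.rpow_add hexp0, Real.rpow_add hexp0,
              Real.rpow_natCast, Real.rpow_natCast]
          rw [e7, ← Real.exp_mul]
          apply Real.exp_le_exp.mpr
          nlinarith
        calc |term γ coef a b j L u v t θ φ|
            ≤ (|coef| * Real.exp (t/2)^a * Real.exp (t/2)^b * 1) *
              ((κ * Real.exp (t/2)) ^ (-γ - (j:ℝ))) := hbound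
        _ = (|coef| * κ ^ (-γ - (j:ℝ))) *
              (Real.exp (t/2)^a * Real.exp (t/2)^b * Real.exp (t/2) ^ (-γ - (j:ℝ))) := by
              rw [hsplit]; ring
        _ ≤ (|coef| * κ ^ (-γ - (j:ℝ))) * Real.exp (-t/4) :=
              mul_le_mul_of_nonneg_left hcollect (by positivity)
        _ ≤ ((|coef| * 2^a * Real.sqrt 3 ^ b) * 4^(X - Y) * 8^(-Y)
              + |coef| * κ ^ (-γ - (j:ℝ)) + 1) * Real.exp (-t/4) := by
              have h8 : 0 ≤ Real.exp (-t/4) := (Real.exp_pos _).le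
              have h9 : (0:ℝ) ≤ (|coef| * 2^a * Real.sqrt 3 ^ b) * 4^(X - Y) * 8^(-Y) := by
                positivity
              nlinarith


lemma Psi_eq_term {α β u v t θ φ : ℝ} (hu : |u| ≤ 1) (hv : |v| ≤ 1) :
    Psi α β t (qfun θ φ u v) = term (α+β+2) 1 0 1 0 [] u v t θ φ := by
  have hD : 0 ≤ Dv u v t θ φ := by
    have h1 := Real.one_le_cosh (t/2)
    have h2 := q_nonneg (θ := θ) (φ := φ) hu hv
    simp only [Dv]; linarith
  simp only [Psi, term, prodA_nil, Dv]
  rw [show -(α+β+2) - ((0:ℕ):ℝ) = -(α+β+2) by norm_num]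
  rw [Real.rpow_neg (by simpa [Dv] using hD), div_eq_mul_inv]
  ring

lemma deriv_eq_rep (α β : ℝ) (m n : ℕ) :
    ∃ f, Rep (α+β+2) (-(m:ℤ)-(n:ℤ)) true f ∧
      ∀ u v θ φ t : ℝ, |u| ≤ 1 → |v| ≤ 1 → 0 < t →
        deriv (fun φ' => iteratedDeriv n
          (fun θ' => iteratedDeriv m (fun t' => Psi α β t' (qfun θ' φ' u v)) t) θ) φ
          = f u v t θ φ := by
  have A : ∃ f1, Rep (α+β+2) (1-(m:ℤ)) false f1 ∧
      ∀ u v θ φ t : ℝ, |u| ≤ 1 → |v| ≤ 1 → 0 < t →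
        iteratedDeriv m (fun t' => Psi α β t' (qfun θ φ u v)) t = f1 u v t θ φ := by
    induction m with
    | zero =>
        refine ⟨term (α+β+2) 1 0 1 0 [], ?_, ?_⟩
        · exact Rep.term 1 0 1 0 [] (by simp [eL]) (by simp) (by simp) (by simp)
        · intro u v θ φ t hu hv ht
          rw [iteratedDeriv_zero]
          exact Psi_eq_term hu hv
    | succ m ihm =>
        obtain ⟨f1, hf1, he1⟩ := ihm
        obtain ⟨g, hg, hd⟩ := repDerivT hf1
        refine ⟨g, ?_, ?_⟩
        · rw [show (1:ℤ)-((m+1:ℕ):ℤ) = (1-(m:ℤ))-1 by push_cast; ring]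
          exact hg
        · intro u v θ φ t hu hv ht
          rw [iteratedDeriv_succ]
          have heq : (fun t' => iteratedDeriv m (fun t'' => Psi α β t'' (qfun θ φ u v)) t')
              =ᶠ[nhds t] (fun t' => f1 u v t' θ φ) := by
            filter_upwards [isOpen_Ioi.mem_nhds ht] with t' ht'
            exact he1 u v θ φ t' hu hv ht'
          rw [heq.deriv_eq]
          exact (hd u v t θ φ hu hv ht).deriv
  obtain ⟨f1, hf1, he1⟩ := A
  have B : ∃ f2, Rep (α+β+2) (1-(m:ℤ)-(n:ℤ)) false f2 ∧
      ∀ u v θ φ t : ℝ, |u| ≤ 1 → |v| ≤ 1 → 0 < t →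
        iteratedDeriv n (fun θ' => f1 u v t θ' φ) θ = f2 u v t θ φ := by
    induction n with
    | zero =>
        refine ⟨f1, by simpa using hf1, ?_⟩
        intro u v θ φ t hu hv ht
        rw [iteratedDeriv_zero]
    | succ n ihn =>
        obtain ⟨f2, hf2, he2⟩ := ihn
        obtain ⟨g, hg, hd⟩ := repDerivTheta hf2
        refine ⟨g, ?_, ?_⟩
        · rw [show (1:ℤ)-(m:ℤ)-((n+1:ℕ):ℤ) = (1-(m:ℤ)-(n:ℤ))-1 by push_cast; ring]
          exact Rep.of_true false hg
        · intro u v θ φ t hu hv ht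
          rw [iteratedDeriv_succ]
          have heq : iteratedDeriv n (fun θ'' => f1 u v t θ'' φ)
              = (fun θ' => f2 u v t θ' φ) :=
            funext fun θ' => he2 u v θ' φ t hu hv ht
          rw [heq]
          exact (hd u v t θ φ hu hv ht).deriv
  obtain ⟨f2, hf2, he2⟩ := B
  obtain ⟨f3, hf3, hd3⟩ := repDerivPhi hf2
  refine ⟨f3, ?_, ?_⟩
  · rw [show -(m:ℤ)-(n:ℤ) = (1-(m:ℤ)-(n:ℤ))-1 by ring]
    exact hf3
  · intro u v θ φ t hu hv ht
    have heq : (fun φ' => iteratedDeriv n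
        (fun θ' => iteratedDeriv m (fun t' => Psi α β t' (qfun θ' φ' u v)) t) θ)
        = (fun φ' => f2 u v t θ φ') := by
      funext φ'
      have e0 : (fun θ' => iteratedDeriv m (fun t' => Psi α β t' (qfun θ' φ' u v)) t)
          = (fun θ' => f1 u v t θ' φ') :=
        funext fun θ' => he1 u v θ' φ' t hu hv ht
      rw [e0]
      exact he2 u v θ φ' t hu hv ht
    rw [heq]
    exact (hd3 u v t θ φ hu hv ht).deriv

end PsiAux

/-- Lemma 4.8 in [NoSjogren], second estimate. -/
theorem Psi_derivative_bounds_phi (α β : ℝ) (hα : -(1 / 2) ≤ α) (hβ : -(1 / 2) ≤ β) (m n : ℕ) :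
    ∃ C : ℝ, 0 < C ∧
      ∀ θ ∈ Ioo (0 : ℝ) π, ∀ φ ∈ Ioo (0 : ℝ) π,
        ∀ u ∈ Icc (-1 : ℝ) 1, ∀ v ∈ Icc (-1 : ℝ) 1, ∀ t : ℝ, 0 < t →
          (t ≤ 1 →
            |deriv (fun φ' =>
                iteratedDeriv n
                  (fun θ' => iteratedDeriv m (fun t' => Psi α β t' (qfun θ' φ' u v)) t) θ) φ|
              ≤ C * (t ^ 2 + qfun θ φ u v) ^
                  (-(α + β + 2) - ((m : ℝ) + (n : ℝ)) / 2)) ∧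
          (1 < t →
            |deriv (fun φ' =>
                iteratedDeriv n
                  (fun θ' => iteratedDeriv m (fun t' => Psi α β t' (qfun θ' φ' u v)) t) θ) φ|
              ≤ C * Real.exp (-t / 4)) := by
  obtain ⟨f, hf, he⟩ := PsiAux.deriv_eq_rep α β m n
  have hγ : (1:ℝ) ≤ α + β + 2 := by linarith
  have hw : (-(m:ℤ)-(n:ℤ)) ≤ 0 := by omega
  obtain ⟨C, hC, hb⟩ := PsiAux.repBound hγ hw hf
  refine ⟨C, hC, fun θ hθ φ hφ u hu v hv t ht => ?_⟩
  have hu' : |u| ≤ 1 := abs_le.mpr ⟨hu.1, hu.2⟩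
  have hv' : |v| ≤ 1 := abs_le.mpr ⟨hv.1, hv.2⟩
  have hE : ((-(m:ℤ)-(n:ℤ) : ℤ) : ℝ)/2 - (α+β+2) = -(α + β + 2) - ((m : ℝ) + (n : ℝ)) / 2 := by
    push_cast; ring
  obtain ⟨hsmall, hlarge⟩ := hb u v t θ φ hu' hv' ht
  rw [hE] at hsmall
  rw [he u v θ φ t hu' hv' ht]
  exact ⟨hsmall, hlarge⟩
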